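/- Let h be a purely odd complex super-vector space with super-symmetric non-degenerate pairing, S(h) its symmetric algebra in super-vector spaces (equal to the exterior algebra of the underlying space), which is a commutative cocommutative Hopf super-algebra with Δ(a) = a⊗1 + 1⊗a and S(a) = −a for a ∈ h. Fix a basis a_1,...,a_d with ψ ∈ S(h)* supported only on the monomial a_1⋯a_{d/2} (d even), and let m = a_{d/2+1}⋯a_d. Then for every g ∈ S(h), Σ_{(g)} g'·m · ψ(g'') = m · ψ(g), where Δ(g) = Σ_{(g)} g'⊗g'' is Sweedler notation and g'·m denotes the product in S(h). -/

import Mathlib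

open ExteriorAlgebra

/-- If `x` occurs in a list, then `ι x` times the product of the `ι`s of the list is zero. -/
lemma aux_iota_mul_prod_zero {V : Type*} [AddCommGroup V] [Module ℂ V]
    (x : V) (l : List V) (hx : x ∈ l) :
    ExteriorAlgebra.ι ℂ x * (l.map (ExteriorAlgebra.ι ℂ)).prod = 0 := by
  induction l with
  | nil => simp at hx
  | cons y t ih =>
    rw [List.map_cons, List.prod_cons, ← mul_assoc]
    rcases List.mem_cons.mp hx with h | h
    · subst h; rw [ExteriorAlgebra.ι_sq_zero, zero_mul]
    · have hswap : ExteriorAlgebra.ι ℂ x * ExteriorAlgebra.ι ℂ y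
          = -(ExteriorAlgebra.ι ℂ y * ExteriorAlgebra.ι ℂ x) := by
        exact eq_neg_of_add_eq_zero_left (ExteriorAlgebra.ι_add_mul_swap x y)
      rw [hswap, neg_mul, mul_assoc, ih h, mul_zero, neg_zero]

/-- In the exterior (super-symmetric) algebra `S(h) = Λ(h)` of a `d = 2r`-dimensional
space with basis `a_0,…,a_{d-1}`, regarded as a Hopf algebra in super-vector spaces,
let `ψ` be a linear functional supported only on the monomial `a_0⋯a_{r-1}` and let
`m = a_r⋯a_{d-1}`.  Then for every monomial `g = mono I`, the Sweedler-type identity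
`Σ_{(g)} g'·m·ψ(g'') = m·ψ(g)` holds, where the coproduct of a monomial is
`Δ(mono I) = Σ_{S ⊆ I} sgn(I,S)· mono S ⊗ mono (I∖S)` with the Koszul sign `sgn(I,S)`
determined by `mono S · mono (I∖S) = sgn(I,S) · mono I`. -/
theorem stmt15 (r : ℕ) (hr : 0 < r) (V : Type*) [AddCommGroup V] [Module ℂ V]
    (a : Module.Basis (Fin (2 * r)) ℂ V)
    (mono : Finset (Fin (2 * r)) → ExteriorAlgebra ℂ V)
    (hmono : ∀ I, mono I =
      ((I.sort (· ≤ ·)).map fun i => ExteriorAlgebra.ι ℂ (a i)).prod)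
    (ψ : ExteriorAlgebra ℂ V →ₗ[ℂ] ℂ)
    (hψ : ∀ I : Finset (Fin (2 * r)),
      I ≠ Finset.univ.filter (fun i : Fin (2 * r) => (i : ℕ) < r) → ψ (mono I) = 0)
    (m : ExteriorAlgebra ℂ V)
    (hm : m = mono (Finset.univ.filter fun i => r ≤ (i : ℕ)))
    (sgn : Finset (Fin (2 * r)) → Finset (Fin (2 * r)) → ℂ)
    (hsgn : ∀ I S, S ⊆ I → mono S * mono (I \ S) = sgn I S • mono I)
    (I : Finset (Fin (2 * r))) :
    ∑ S ∈ I.powerset, sgn I S • (ψ (mono (I \ S)) • (mono S * m))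
      = ψ (mono I) • m := by
  classical
  set L : Finset (Fin (2 * r)) := Finset.univ.filter (fun i => (i : ℕ) < r) with hL
  -- a term vanishes unless I \ S = L
  have hvanish : ∀ S ∈ I.powerset, I \ S ≠ L →
      sgn I S • (ψ (mono (I \ S)) • (mono S * m)) = 0 := by
    intro S hS hSne
    rw [hψ _ hSne, zero_smul, smul_zero]
  by_cases hLI : L ⊆ I
  · have hmem : I \ L ∈ I.powerset := Finset.mem_powerset.mpr (Finset.sdiff_subset)
    rw [Finset.sum_eq_single_of_mem (I \ L) hmem (fun S hS hSne => by
      refine hvanish S hS ?_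
      intro h
      apply hSne
      have hSsub : S ⊆ I := Finset.mem_powerset.mp hS
      have h2 : I \ (I \ S) = I \ L := by rw [h]
      rwa [Finset.sdiff_sdiff_eq_self hSsub] at h2)]
    have hdiff : I \ (I \ L) = L := Finset.sdiff_sdiff_eq_self hLI
    by_cases hIL : I = L
    · -- here I = L, so I \ L = ∅ and mono ∅ = 1
      have h0 : I \ L = ∅ := by rw [hIL]; exact Finset.sdiff_self L
      have hmono0 : mono ∅ = 1 := by
        rw [hmono]; simp
      have hkey := hsgn I ∅ (Finset.empty_subset I)
      rw [hmono0, one_mul, Finset.sdiff_empty] at hkey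
      -- apply ψ to hkey : mono I = sgn I ∅ • mono I
      have hψkey : ψ (mono I) = sgn I ∅ * ψ (mono I) := by
        conv_lhs => rw [hkey]
        rw [map_smul, smul_eq_mul]
      rw [h0, Finset.sdiff_empty, hmono0, one_mul, smul_smul, ← hψkey]
    · -- here L ⊂ I; then I \ L contains an index ≥ r, so (mono (I\L)) * m = 0
      have hne : (I \ L).Nonempty := by
        rw [Finset.sdiff_nonempty]
        intro h
        exact hIL (Finset.Subset.antisymm h hLI)
      obtain ⟨j, hj⟩ := hne
      have hjI : j ∈ I := (Finset.mem_sdiff.mp hj).1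
      have hjL : j ∉ L := (Finset.mem_sdiff.mp hj).2
      have hjr : r ≤ (j : ℕ) := by
        by_contra h
        exact hjL (by simp [hL, lt_of_not_ge h])
      have hjU : j ∈ Finset.univ.filter (fun i : Fin (2 * r) => r ≤ (i : ℕ)) := by
        simp [hjr]
      -- mono (I\L) * m = 0 : the generator a j occurs in both
      have hzero : mono (I \ L) * m = 0 := by
        rw [hm, hmono, hmono]
        obtain ⟨l₁, l₂, hsplit⟩ := List.append_of_mem ((Finset.mem_sort (α := Fin (2 * r)) (· ≤ ·)).mpr hj)
        rw [hsplit]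
        rw [List.map_append, List.prod_append, List.map_cons, List.prod_cons]
        have hmem2 : a j ∈ (l₂ ++ (Finset.univ.filter fun i : Fin (2 * r) =>
            r ≤ (i : ℕ)).sort (· ≤ ·)).map a := by
          apply List.mem_map_of_mem
          exact List.mem_append.mpr (Or.inr ((Finset.mem_sort (α := Fin (2 * r)) (· ≤ ·)).mpr hjU))
        have hz := aux_iota_mul_prod_zero (a j)
          ((l₂ ++ (Finset.univ.filter fun i : Fin (2 * r) =>
            r ≤ (i : ℕ)).sort (· ≤ ·)).map a) hmem2
        rw [List.map_map] at hz
        have : ((l₂.map fun i => ExteriorAlgebra.ι ℂ (a i)).prod *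
            (((Finset.univ.filter fun i : Fin (2 * r) => r ≤ (i : ℕ)).sort (· ≤ ·)).map
              fun i => ExteriorAlgebra.ι ℂ (a i)).prod)
            = ((l₂ ++ (Finset.univ.filter fun i : Fin (2 * r) =>
              r ≤ (i : ℕ)).sort (· ≤ ·)).map fun i => ExteriorAlgebra.ι ℂ (a i)).prod := by
          rw [List.map_append, List.prod_append]
        rw [mul_assoc, mul_assoc, this]
        have hz' : ExteriorAlgebra.ι ℂ (a j) *
            ((l₂ ++ (Finset.univ.filter fun i : Fin (2 * r) =>
              r ≤ (i : ℕ)).sort (· ≤ ·)).map fun i => ExteriorAlgebra.ι ℂ (a i)).prod = 0 := by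
          exact hz
        rw [hz', mul_zero]
      rw [hzero, smul_zero, smul_zero, hψ I hIL, zero_smul]
  · -- L ⊄ I: all terms vanish, and ψ (mono I) = 0
    have hIL : I ≠ L := by rintro rfl; exact hLI (le_refl _)
    rw [Finset.sum_eq_zero, hψ I hIL, zero_smul]
    intro S hS
    apply hvanish S hS
    intro h
    exact hLI (h ▸ Finset.sdiff_subset)
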